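/- Let (T, η, μ) be a strictly positive monad on the category of sets and let (A, e : TA → A) be an indiscrete T-algebra. Then the partial evaluation relation on TA is the identity relation (t₁ is a partial evaluation of t₀ only if t₀ = t₁), and the structure map e : TA → A is a bijection. -/

import Mathlib

open CategoryTheory

universe u

/-- For a strictly positive monad on `Set` and an indiscrete algebra `(A, e)`, the
partial evaluation relation on `TA` is the identity relation and `e` is a bijection. -/
theorem strictly_positive_indiscrete_algebra
    (T : CategoryTheory.Monad (Type u))
    (hpos : ∀ (X : Type u) (x : X) (τ : T.obj (T.obj X)),
      T.μ.app X τ = T.η.app X x → τ = T.η.app (T.obj X) (T.η.app X x))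
    (A : T.Algebra)
    (hind : ∀ t₀ t₁ : T.obj A.A, A.a t₀ = A.a t₁ →
      ∃ τ : T.obj (T.obj A.A), T.μ.app A.A τ = t₀ ∧ T.map A.a τ = t₁) :
    (∀ t₀ t₁ : T.obj A.A,
      (∃ τ : T.obj (T.obj A.A), T.μ.app A.A τ = t₀ ∧ T.map A.a τ = t₁) → t₀ = t₁)
    ∧ Function.Bijective A.a := by
  have hunit : ∀ x : A.A, A.a (T.η.app A.A x) = x := fun x =>
    ConcreteCategory.congr_hom A.unit x
  -- key: every t equals η (a t)
  have key : ∀ t : T.obj A.A, t = T.η.app A.A (A.a t) := by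
    intro t
    set a := A.a t with ha
    have h1 : A.a (T.η.app A.A a) = A.a t := by rw [hunit]
    obtain ⟨σ, hσ1, hσ2⟩ := hind (T.η.app A.A a) t h1
    have hσ := hpos A.A a σ hσ1
    have hnat : T.map A.a (T.η.app (T.obj A.A) (T.η.app A.A a))
        = T.η.app A.A (A.a (T.η.app A.A a)) :=
      (ConcreteCategory.congr_hom (T.η.naturality A.a) (T.η.app A.A a)).symm
    calc t = T.map A.a σ := hσ2.symm
    _ = T.map A.a (T.η.app (T.obj A.A) (T.η.app A.A a)) := by rw [hσ]
    _ = T.η.app A.A (A.a (T.η.app A.A a)) := hnat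
    _ = T.η.app A.A a := by rw [hunit]
  have hid : ∀ t₀ t₁ : T.obj A.A,
      (∃ τ : T.obj (T.obj A.A), T.μ.app A.A τ = t₀ ∧ T.map A.a τ = t₁) → t₀ = t₁ := by
    rintro t₀ t₁ ⟨τ, h1, h2⟩
    have hassoc : A.a (T.map A.a τ) = A.a (T.μ.app A.A τ) := (ConcreteCategory.congr_hom A.assoc τ).symm
    rw [h1, h2] at hassoc
    rw [key t₀, key t₁, hassoc]
  refine ⟨hid, ?_, fun x => ⟨T.η.app A.A x, hunit x⟩⟩
  intro t₀ t₁ h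
  rw [key t₀, key t₁, h]
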